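/- If K is a quasi weakly Radon–Nikodým compact Hausdorff space, L is a compact Hausdorff space, and f : K → L is a continuous surjection, then L is quasi weakly Radon–Nikodým. That is, the continuous image of a QWRN compact space is QWRN. -/

import Mathlib

open Set Function

/-- A sequence of pairs of subsets `(A n, B n)` of a set `S` is *independent* if for every
`n` and every choice function `ε`, the intersection over `k < n` of `A k` (if `ε k = 0/false`)
or `B k` (if `ε k = 1/true`) is nonempty. -/
def IsIndependentSeq {S : Type*} (A B : ℕ → Set S) : Prop :=
  ∀ (n : ℕ) (ε : Fin n → Bool),
    (⋂ k : Fin n, if ε k = true then B (k : ℕ) else A (k : ℕ)).Nonempty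

/-- A compact space `K` is *quasi weakly Radon–Nikodým* (QWRN) if there is a homeomorphic
embedding `i` of `K` into `[0,1]^Γ` for some set `Γ` such that for every `ε > 0` there is a
countable decomposition `Γ = ⋃ n, Γs n` such that for every `n` and all reals `p < q` with
`q - p > ε`, the family of pairs `({x | (i x α : ℝ) < p}, {x | (i x α : ℝ) > q})`, `α ∈ Γs n`,
contains no independent sequence. -/
def IsQWRN (K : Type*) [TopologicalSpace K] : Prop :=
  ∃ (Γ : Type) (i : K → Γ → unitInterval), Topology.IsEmbedding i ∧
    ∀ ε : ℝ, ε > 0 → ∃ Γs : ℕ → Set Γ, (⋃ n, Γs n) = Set.univ ∧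
      ∀ n : ℕ, ∀ p q : ℝ, q - p > ε →
        ¬ ∃ φ : ℕ → Γ, (∀ m, φ m ∈ Γs n) ∧
          IsIndependentSeq (fun m => {x : K | (i x (φ m) : ℝ) < p})
                           (fun m => {x : K | (i x (φ m) : ℝ) > q})

namespace QWRNAux

/-- simple dependent-choice helper -/
lemma dchelper {α : Type*} (R : α → α → Prop) (a0 : α) (h : ∀ a, ∃ b, R a b) :
    ∃ f : ℕ → α, f 0 = a0 ∧ ∀ n, R (f n) (f (n + 1)) := by
  choose g hg using h
  exact ⟨fun n => Nat.rec a0 (fun _ a => g a) n, rfl, fun n => hg _⟩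

/-- `t` is an initial segment of `N`. -/
def IsInit (t : Finset ℕ) (N : Set ℕ) : Prop :=
  ↑t ⊆ N ∧ ∀ x ∈ N, ∀ y ∈ t, x ≤ y → x ∈ t

lemma isInit_empty (N : Set ℕ) : IsInit ∅ N := by
  constructor
  · simp
  · intro x _ y hy
    simp at hy

lemma isInit_insert_min {t : Finset ℕ} {P : Set ℕ} {a : ℕ}
    (ha : a ∈ P) (hmin : ∀ p ∈ P, a ≤ p)
    (ht : IsInit t (P \ {a})) : IsInit (insert a t) P := by
  constructor
  · intro x hx
    simp only [Finset.coe_insert, Set.mem_insert_iff] at hx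
    rcases hx with rfl | hx
    · exact ha
    · exact (ht.1 hx).1
  · intro x hx y hy hxy
    simp only [Finset.mem_insert] at hy ⊢
    by_cases hxa : x = a
    · exact Or.inl hxa
    · rcases hy with rfl | hy
      · exact absurd (le_antisymm hxy (hmin x hx)) hxa
      · exact Or.inr (ht.2 x ⟨hx, by simpa using hxa⟩ y hy hxy)

section Galvin

variable (F : Set (Finset ℕ))

def Accepts (M : Set ℕ) (s : Finset ℕ) : Prop :=
  ∀ N, N ⊆ M → N.Infinite → ∃ t : Finset ℕ, IsInit t N ∧ s ∪ t ∈ F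

def Rejects (M : Set ℕ) (s : Finset ℕ) : Prop :=
  ∀ N, N ⊆ M → N.Infinite → ¬ Accepts F N s

variable {F}

lemma Accepts.mono {M N : Set ℕ} {s : Finset ℕ} (h : Accepts F M s) (hNM : N ⊆ M) :
    Accepts F N s := fun P hP hPi => h P (hP.trans hNM) hPi

lemma Rejects.mono {M N : Set ℕ} {s : Finset ℕ} (h : Rejects F M s) (hNM : N ⊆ M) :
    Rejects F N s := fun P hP hPi => h P (hP.trans hNM) hPi

lemma accepts_of_mem {M : Set ℕ} {s : Finset ℕ} (h : s ∈ F) : Accepts F M s :=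
  fun N _ _ => ⟨∅, isInit_empty N, by simpa using h⟩

/-- Key step: if `M` rejects `s`, we can find `N ⊆ M` rejecting `insert a s` for all `a ∈ N`. -/
lemma step_reject {M : Set ℕ} (hM : M.Infinite) {s : Finset ℕ} (hrej : Rejects F M s) :
    ∃ N, N ⊆ M ∧ N.Infinite ∧ ∀ a ∈ N, Rejects F N (insert a s) := by
  by_contra hcon
  push_neg at hcon
  -- from failure: every infinite subset N of M contains a with some N' ⊆ N accepting insert a s
  have key : ∀ N, N ⊆ M → N.Infinite → ∃ a ∈ N, ∃ N', N' ⊆ N ∧ N'.Infinite ∧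
      Accepts F N' (insert a s) := by
    intro N hNM hNi
    rcases hcon N hNM hNi with ⟨a, ha, hnr⟩
    simp only [Rejects, not_forall] at hnr
    rcases hnr with ⟨N', hN'1, hN'2, hN'3⟩
    exact ⟨a, ha, N', hN'1, by tauto, by tauto⟩
  -- build a sequence
  classical
  let St := ℕ × Set ℕ
  let Rel : St → St → Prop := fun st st' =>
    st'.1 ∈ st.2 ∧ st.1 < st'.1 ∧ st'.2 ⊆ st.2 ∧ (∀ n ∈ st'.2, st'.1 < n) ∧
      st'.2.Infinite ∧ st'.2 ⊆ M ∧ Accepts F st'.2 (insert st'.1 s)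
  have hstep : ∀ st : St, (st.2 ⊆ M ∧ st.2.Infinite ∧ ∀ n ∈ st.2, st.1 < n) → ∃ st' : St,
      Rel st st' ∧ (st'.2 ⊆ M ∧ st'.2.Infinite ∧ ∀ n ∈ st'.2, st'.1 < n) := by
    rintro ⟨a, N⟩ ⟨hNM, hNi, hgt⟩
    rcases key N hNM hNi with ⟨a', ha', N', hN'N, hN'i, hacc⟩
    refine ⟨(a', {n ∈ N' | a' < n}), ⟨ha', hgt a' ha', fun n hn => hN'N hn.1,
      fun n hn => hn.2, ?_, fun n hn => hNM (hN'N hn.1), hacc.mono (fun n hn => hn.1)⟩,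
      fun n hn => hNM (hN'N hn.1), ?_, fun n hn => hn.2⟩
    · exact ((hN'i.diff (Set.finite_Iic a')).mono (by
        intro n hn; rcases hn with ⟨h1, h2⟩; exact ⟨h1, by simpa using h2⟩))
    · exact (hN'i.diff (Set.finite_Iic a')).mono (by
        intro n hn; rcases hn with ⟨h1, h2⟩; exact ⟨h1, by simpa using h2⟩)
  -- initial state
  have hinit : ({n ∈ M | 0 < n} : Set ℕ) ⊆ M ∧ ({n ∈ M | 0 < n} : Set ℕ).Infinite ∧
      ∀ n ∈ ({n ∈ M | 0 < n} : Set ℕ), (0 : ℕ) < n := by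
    refine ⟨fun n hn => hn.1, (hM.diff (Set.finite_Iic 0)).mono ?_, fun n hn => hn.2⟩
    intro n hn
    exact ⟨hn.1, Nat.pos_of_ne_zero (by simpa using hn.2)⟩
  let St' := {st : St // st.2 ⊆ M ∧ st.2.Infinite ∧ ∀ n ∈ st.2, st.1 < n}
  have hstep' : ∀ st : St', ∃ st' : St', Rel st.1 st'.1 := by
    intro ⟨st, hst⟩
    rcases hstep st hst with ⟨st', h1, h2⟩
    exact ⟨⟨st', h2⟩, h1⟩
  rcases dchelper (fun st st' : St' => Rel st.1 st'.1) ⟨(0, {n ∈ M | 0 < n}), hinit⟩ hstep'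
    with ⟨g, hg0, hgrel⟩
  set a : ℕ → ℕ := fun k => (g (k + 1)).1.1 with ha
  set N : ℕ → Set ℕ := fun k => (g (k + 1)).1.2 with hN
  have hrel : ∀ k, Rel (g k).1 (g (k + 1)).1 := hgrel
  have haN : ∀ k, a (k + 1) ∈ N k := fun k => (hrel (k + 1)).1
  have haMono : StrictMono a := by
    apply strictMono_nat_of_lt_succ
    intro k
    exact (hrel (k + 1)).2.1
  have hNM : ∀ k, N k ⊆ M := fun k => (g (k + 1)).2.1
  have hNdec : ∀ k j, k ≤ j → N j ⊆ N k := by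
    intro k j hkj
    induction j with
    | zero => simp_all
    | succ j ih =>
      rcases Nat.eq_or_lt_of_le hkj with rfl | hlt
      · exact fun x hx => hx
      · exact ((hrel (j + 1)).2.2.1).trans (ih (Nat.lt_succ_iff.mp hlt))
  have hacc : ∀ k, Accepts F (N k) (insert (a k) s) := fun k => (hrel k).2.2.2.2.2.2
  have haM : ∀ k, a k ∈ M := by
    intro k
    cases k with
    | zero =>
      have h := (hrel 0).1
      rw [hg0] at h
      exact h.1
    | succ k => exact hNM k (haN k)
  -- the range of a accepts s
  have haccstar : Accepts F (Set.range a) s := by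
    intro P hP hPi
    have hPne : P.Nonempty := hPi.nonempty
    obtain ⟨m, hmP, hmin⟩ : ∃ m ∈ P, ∀ p ∈ P, m ≤ p := by
      classical
      have hex : ∃ n, n ∈ P := hPne
      exact ⟨Nat.find hex, Nat.find_spec hex, fun p hp => Nat.find_min' hex hp⟩
    obtain ⟨k, hk⟩ := hP hmP
    have hP'sub : P \ {m} ⊆ N k := by
      intro p hp
      obtain ⟨j, hj⟩ := hP hp.1
      have hpm : m < p := by
        rcases Nat.lt_or_ge m p with h | h
        · exact h
        · exact absurd (le_antisymm h (hmin p hp.1)) (by simpa using hp.2)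
      have hkj : k < j := by
        by_contra hjk
        push_neg at hjk
        have := haMono.le_iff_le.mpr hjk
        rw [hj, hk] at this
        omega
      -- a j ∈ N (j-1) ⊆ N k
      obtain ⟨j', rfl⟩ : ∃ j', j = j' + 1 := ⟨j - 1, by omega⟩
      rw [← hj]
      exact hNdec k j' (by omega) (haN j')
    have hP'i : (P \ {m}).Infinite := hPi.diff (Set.finite_singleton m)
    rcases hacc k (P \ {m}) hP'sub hP'i with ⟨t, htinit, htF⟩
    refine ⟨insert m t, isInit_insert_min hmP hmin htinit, ?_⟩
    have : s ∪ insert m t = insert (a k) s ∪ t := by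
      rw [← hk]
      rw [Finset.union_insert, Finset.insert_union]
    rw [this]
    exact htF
  exact hrej (Set.range a) (by rintro x ⟨k, rfl⟩; exact haM k)
    (Set.infinite_range_of_injective haMono.injective) haccstar

/-- iterate `step_reject` over a finite family -/
lemma step_reject_finset {M : Set ℕ} (hM : M.Infinite) (S : Finset (Finset ℕ))
    (h : ∀ s ∈ S, Rejects F M s) :
    ∃ N, N ⊆ M ∧ N.Infinite ∧ ∀ s ∈ S, ∀ a ∈ N, Rejects F N (insert a s) := by
  classical
  induction S using Finset.induction_on generalizing M with
  | empty => exact ⟨M, fun x hx => hx, hM, by simp⟩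
  | @insert s₀ S' hs₀ ih =>
    rcases ih hM (fun s hs => h s (Finset.mem_insert_of_mem hs)) with ⟨N', hN'M, hN'i, hN'⟩
    rcases step_reject hN'i ((h s₀ (Finset.mem_insert_self s₀ S')).mono hN'M)
      with ⟨N, hNN', hNi, hN⟩
    refine ⟨N, hNN'.trans hN'M, hNi, ?_⟩
    intro s hs a haN
    rcases Finset.mem_insert.mp hs with rfl | hs
    · exact hN a haN
    · exact (hN' s hs a (hNN' haN)).mono hNN'

/-- Galvin's lemma (Nash–Williams). -/
theorem galvin (F : Set (Finset ℕ)) (M₀ : Set ℕ) (h₀ : M₀.Infinite) :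
    ∃ M, M ⊆ M₀ ∧ M.Infinite ∧
      ((∀ s : Finset ℕ, ↑s ⊆ M → s ∉ F) ∨
        (∀ N, N ⊆ M → N.Infinite → ∃ t, IsInit t N ∧ t ∈ F)) := by
  classical
  by_cases hacc : ∃ M, M ⊆ M₀ ∧ M.Infinite ∧ Accepts F M ∅
  · rcases hacc with ⟨M, hMM₀, hMi, hMacc⟩
    refine ⟨M, hMM₀, hMi, Or.inr ?_⟩
    intro N hN hNi
    rcases hMacc N hN hNi with ⟨t, ht1, ht2⟩
    exact ⟨t, ht1, by simpa using ht2⟩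
  · -- M₀ rejects ∅
    have hrej : Rejects F M₀ ∅ := by
      intro N hN hNi hNacc
      exact hacc ⟨N, hN, hNi, hNacc⟩
    -- build a fusion sequence
    let St := Finset ℕ × Set ℕ
    let Inv : St → Prop := fun st =>
      st.2 ⊆ M₀ ∧ st.2.Infinite ∧ ↑st.1 ⊆ M₀ ∧ (∀ b ∈ st.1, ∀ n ∈ st.2, b < n) ∧
        (∀ s : Finset ℕ, s ⊆ st.1 → Rejects F st.2 s)
    let Rel : St → St → Prop := fun st st' =>
      st.1 ⊆ st'.1 ∧ st'.1.card = st.1.card + 1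
    have hstep : ∀ st : St, Inv st → ∃ st' : St, Inv st' ∧ Rel st st' := by
      rintro ⟨A, M⟩ ⟨h1, h2, h3, h4, h5⟩
      rcases step_reject_finset h2 A.powerset (fun s hs => h5 s (Finset.mem_powerset.mp hs))
        with ⟨N, hNM, hNi, hN⟩
      have hNne : N.Nonempty := hNi.nonempty
      obtain ⟨a', ha'⟩ := hNne
      refine ⟨(insert a' A, {n ∈ N | a' < n}), ⟨?_, ?_, ?_, ?_, ?_⟩, ?_, ?_⟩
      · exact fun n hn => h1 (hNM hn.1)
      · exact (hNi.diff (Set.finite_Iic a')).mono (fun n hn => ⟨hn.1, by simpa using hn.2⟩)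
      · intro x hx
        simp only [Finset.coe_insert, Set.mem_insert_iff] at hx
        rcases hx with rfl | hx
        · exact h1 (hNM ha')
        · exact h3 hx
      · intro b hb n hn
        rcases Finset.mem_insert.mp hb with rfl | hb
        · exact hn.2
        · exact h4 b hb n (hNM hn.1)
      · intro s hs
        by_cases ha's : a' ∈ s
        · have : s = insert a' (s.erase a') := by
            rw [Finset.insert_erase ha's]
          rw [this]
          refine (hN (s.erase a') (Finset.mem_powerset.mpr ?_) a' ha').mono (fun n hn => hn.1)
          intro x hx
          have := hs (Finset.mem_of_mem_erase hx)
          rcases Finset.mem_insert.mp this with rfl | h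
          · exact absurd rfl (Finset.ne_of_mem_erase hx)
          · exact h
        · have hsA : s ⊆ A := by
            intro x hx
            rcases Finset.mem_insert.mp (hs hx) with rfl | h
            · exact absurd hx ha's
            · exact h
          exact ((h5 s hsA).mono hNM).mono (fun n hn => hn.1)
      · exact Finset.subset_insert a' A
      · rw [Finset.card_insert_of_notMem]
        intro ha'A
        exact lt_irrefl a' (h4 a' ha'A a' (hNM ha'))
    have hInv0 : Inv (∅, M₀) := by
      refine ⟨fun x hx => hx, h₀, by simp, by simp, ?_⟩
      intro s hs
      rw [Finset.subset_empty.mp hs]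
      exact hrej
    have hstep' : ∀ st : {st : St // Inv st}, ∃ st' : {st : St // Inv st},
        Rel st.1 st'.1 := by
      intro ⟨st, hst⟩
      rcases hstep st hst with ⟨st', h1, h2⟩
      exact ⟨⟨st', h1⟩, h2⟩
    rcases dchelper (fun st st' : {st : St // Inv st} => Rel st.1 st'.1) ⟨(∅, M₀), hInv0⟩
      hstep' with ⟨g, hg0, hgrel⟩
    set A : ℕ → Finset ℕ := fun k => (g k).1.1 with hA
    have hAmono : ∀ k j, k ≤ j → A k ⊆ A j := by
      intro k j hkj
      induction j with
      | zero => simp_all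
      | succ j ih =>
        rcases Nat.eq_or_lt_of_le hkj with rfl | hlt
        · exact fun x hx => hx
        · exact (ih (Nat.lt_succ_iff.mp hlt)).trans (hgrel j).1
    have hAcard : ∀ k, (A k).card = k := by
      intro k
      induction k with
      | zero => simp [hA, hg0]
      | succ k ih => rw [hA] at *; rw [(hgrel k).2, ih]
    refine ⟨⋃ k, ↑(A k), ?_, ?_, Or.inl ?_⟩
    · intro x hx
      simp only [Set.mem_iUnion] at hx
      rcases hx with ⟨k, hk⟩
      exact (g k).2.2.2.1 hk
    · intro hfin
      have : ∀ k, (A k) ⊆ hfin.toFinset := by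
        intro k x hx
        rw [Set.Finite.mem_toFinset]
        exact Set.mem_iUnion.mpr ⟨k, hx⟩
      have h1 := Finset.card_le_card (this (hfin.toFinset.card + 1))
      rw [hAcard] at h1
      omega
    · have hsk : ∀ s : Finset ℕ, ↑s ⊆ (⋃ k, (↑(A k) : Set ℕ)) → ∃ k, s ⊆ A k := by
        classical
        intro s
        induction s using Finset.induction_on with
        | empty => exact fun _ => ⟨0, by simp⟩
        | @insert x s' hx ih =>
          intro hs
          have hsub : ↑s' ⊆ ⋃ k, (↑(A k) : Set ℕ) := by
            intro y hy
            exact hs (by simp only [Finset.coe_insert, Set.mem_insert_iff]; exact Or.inr hy)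
          rcases ih hsub with ⟨k1, hk1⟩
          have hxmem : x ∈ ⋃ k, (↑(A k) : Set ℕ) := hs (by simp)
          simp only [Set.mem_iUnion, Finset.mem_coe] at hxmem
          rcases hxmem with ⟨k2, hk2⟩
          refine ⟨max k1 k2, ?_⟩
          intro y hy
          rcases Finset.mem_insert.mp hy with rfl | hy
          · exact hAmono k2 (max k1 k2) (le_max_right _ _) hk2
          · exact hAmono k1 (max k1 k2) (le_max_left _ _) (hk1 hy)
      intro s hs hsF
      rcases hsk s hs with ⟨k, hk⟩
      have hrejs : Rejects F (g k).1.2 s := (g k).2.2.2.2.2 s hk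
      exact hrejs (g k).1.2 (fun x hx => hx) (g k).2.2.1 (accepts_of_mem hsF)

end Galvin


section Rosenthal

variable {X : Type*}

/-- Independence of a family of pairs of sets over an index set `M`. -/
def IndepPairs (A B : ℕ → Set X) (M : Set ℕ) : Prop :=
  ∀ F₀ F₁ : Finset ℕ, ↑F₀ ⊆ M → ↑F₁ ⊆ M → Disjoint F₀ F₁ →
    ((⋂ m ∈ F₀, A m) ∩ ⋂ m ∈ F₁, B m).Nonempty

/-- The alternating pattern on a finite set `s` is realized. -/
def Realized (A B : ℕ → Set X) (s : Finset ℕ) : Prop :=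
  ∃ x : X, ∀ m ∈ s, (Even ((s.filter (· < m)).card) → x ∈ A m) ∧
    (¬ Even ((s.filter (· < m)).card) → x ∈ B m)

lemma padding (D : Finset ℕ) (tgt : ℕ → Prop) :
    (∀ d ∈ D, 2 ≤ d ∧ Even d) →
    ∃ C : Finset ℕ, D ⊆ C ∧
      (∀ d ∈ D, (Even ((C.filter (· < d)).card) ↔ tgt d)) ∧
      (∀ c ∈ C, ∃ d ∈ D, c ≤ d) := by
  classical
  induction D using Finset.induction_on_max with
  | empty => exact fun _ => ⟨∅, by simp, by simp, by simp⟩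
  | insert a D' hlt ih =>
    intro hD
    rcases ih (fun d hd => hD d (Finset.mem_insert_of_mem hd)) with ⟨C', hC'1, hC'2, hC'3⟩
    have ha2 : 2 ≤ a ∧ Even a := hD a (Finset.mem_insert_self a D')
    have hC'lt : ∀ c ∈ C', c < a - 1 := by
      intro c hc
      rcases hC'3 c hc with ⟨d, hd, hcd⟩
      have hda : d < a := hlt d hd
      have hde : Even d := (hD d (Finset.mem_insert_of_mem hd)).2
      rcases ha2.2 with ⟨a2, ha2'⟩
      rcases hde with ⟨d2, hd2⟩
      omega
    have haC' : a ∉ C' := fun h => by have := hC'lt a h; omega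
    have ha1C' : a - 1 ∉ C' := fun h => by have := hC'lt (a - 1) h; omega
    have hfiltC' : C'.filter (· < a) = C' := by
      apply Finset.filter_true_of_mem
      intro c hc
      have := hC'lt c hc
      omega
    by_cases hpar : Even C'.card ↔ tgt a
    · refine ⟨insert a C', Finset.insert_subset_insert a hC'1, ?_, ?_⟩
      · intro d hd
        rcases Finset.mem_insert.mp hd with heq | hd
        · subst heq
          rw [Finset.filter_insert]
          simp only [lt_irrefl, if_false, hfiltC']
          exact hpar
        · have hda : d < a := hlt d hd
          rw [Finset.filter_insert]
          simp only [hda.not_gt, if_false]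
          exact hC'2 d hd
      · intro c hc
        rcases Finset.mem_insert.mp hc with rfl | hc
        · exact ⟨c, Finset.mem_insert_self c D', le_refl c⟩
        · rcases hC'3 c hc with ⟨d, hd, hcd⟩
          exact ⟨d, Finset.mem_insert_of_mem hd, hcd⟩
    · refine ⟨insert a (insert (a - 1) C'), ?_, ?_, ?_⟩
      · intro d hd
        rcases Finset.mem_insert.mp hd with rfl | hd
        · exact Finset.mem_insert_self _ _
        · exact Finset.mem_insert_of_mem (Finset.mem_insert_of_mem (hC'1 hd))
      · intro d hd
        rcases Finset.mem_insert.mp hd with heq | hd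
        · subst heq
          rw [Finset.filter_insert]
          simp only [lt_irrefl, if_false]
          rw [Finset.filter_insert]
          have hlt1 : d - 1 < d := by
            have := ha2.1
            omega
          rw [if_pos hlt1, hfiltC', Finset.card_insert_of_notMem ha1C', Nat.even_add_one]
          tauto
        · have hda : d < a := hlt d hd
          have hde : Even d := (hD d (Finset.mem_insert_of_mem hd)).2
          have hd1 : ¬ (a - 1 < d) := by
            rcases ha2.2 with ⟨a2, ha2'⟩
            rcases hde with ⟨d2, hd2⟩
            omega
          rw [Finset.filter_insert]
          simp only [hda.not_gt, if_false]
          rw [Finset.filter_insert]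
          simp only [hd1, if_false]
          exact hC'2 d hd
      · intro c hc
        rcases Finset.mem_insert.mp hc with rfl | hc
        · exact ⟨c, Finset.mem_insert_self c D', le_refl c⟩
        rcases Finset.mem_insert.mp hc with rfl | hc
        · exact ⟨a, Finset.mem_insert_self a D', by omega⟩
        · rcases hC'3 c hc with ⟨d, hd, hcd⟩
          exact ⟨d, Finset.mem_insert_of_mem hd, hcd⟩

lemma downward_closed_eq_range {S : Finset ℕ} (h : ∀ j ∈ S, ∀ i, i < j → i ∈ S) :
    S = Finset.range S.card := by
  have hsub : S ⊆ Finset.range S.card := by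
    intro j hj
    by_contra hjge
    simp only [Finset.mem_range, not_lt] at hjge
    have hss : Finset.range (j + 1) ⊆ S := by
      intro i hi
      simp only [Finset.mem_range] at hi
      rcases Nat.lt_succ_iff_lt_or_eq.mp hi with h' | rfl
      · exact h j hj i h'
      · exact hj
    have := Finset.card_le_card hss
    simp only [Finset.card_range] at this
    omega
  exact Finset.eq_of_subset_of_card_le hsub (by simp)

lemma filter_image_card {φ : ℕ → ℕ} (hφ : StrictMono φ) (C : Finset ℕ) (d : ℕ) :
    (((C.image φ).filter (· < φ d)).card) = ((C.filter (· < d)).card) := by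
  classical
  have : (C.image φ).filter (· < φ d) = (C.filter (· < d)).image φ := by
    ext y
    simp only [Finset.mem_filter, Finset.mem_image]
    constructor
    · rintro ⟨⟨c, hc, rfl⟩, hlt⟩
      exact ⟨c, ⟨hc, hφ.lt_iff_lt.mp hlt⟩, rfl⟩
    · rintro ⟨c, ⟨hc, hlt⟩, rfl⟩
      exact ⟨⟨c, hc, rfl⟩, hφ.lt_iff_lt.mpr hlt⟩
  rw [this, Finset.card_image_of_injective _ hφ.injective]

/-- Rosenthal-type dichotomy: a sequence of pairs with no independent infinite subfamily
has a "convergent" infinite subsequence. -/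
theorem rosenthal (A B : ℕ → Set X) (M₀ : Set ℕ) (h₀ : M₀.Infinite)
    (hni : ∀ M, M ⊆ M₀ → M.Infinite → ¬ IndepPairs A B M) :
    ∃ M, M ⊆ M₀ ∧ M.Infinite ∧ ∀ x : X,
      ¬ ({m | m ∈ M ∧ x ∈ A m}.Infinite ∧ {m | m ∈ M ∧ x ∈ B m}.Infinite) := by
  classical
  obtain ⟨M, hMM₀, hMi, hMcase⟩ := galvin {s : Finset ℕ | ¬ Realized A B s} M₀ h₀
  rcases hMcase with hall | hinit
  · -- all finite subsets realized: build an independent subfamily, contradiction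
    exfalso
    have hall' : ∀ s : Finset ℕ, ↑s ⊆ M → Realized A B s := by
      intro s hs
      by_contra h
      exact hall s hs h
    set p : ℕ → Prop := fun n => n ∈ M with hp
    have hpi : (setOf p).Infinite := hMi
    have hφmono : StrictMono (Nat.nth p) := Nat.nth_strictMono hpi
    have hφmem : ∀ j, Nat.nth p j ∈ M := Nat.nth_mem_of_infinite hpi
    have hcount : ∀ j, Nat.count p (Nat.nth p j) = j := by
      intro j
      exact Nat.count_nth (fun hf => absurd hf hpi)
    set M' : Set ℕ := Nat.nth p '' {j | 2 ≤ j ∧ Even j} with hM'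
    have hM'M : M' ⊆ M := by
      rintro x ⟨j, _, rfl⟩
      exact hφmem j
    have hM'i : M'.Infinite := by
      refine Set.infinite_of_injective_forall_mem
        (f := fun k : ℕ => Nat.nth p (2 * k + 2)) ?_ ?_
      · intro k1 k2 hk
        have := hφmono.injective hk
        omega
      · intro k
        exact ⟨2 * k + 2, ⟨by omega, ⟨k + 1, by omega⟩⟩, rfl⟩
    refine hni M' (hM'M.trans hMM₀) hM'i ?_
    intro F₀ F₁ hF₀ hF₁ hdisj
    set D : Finset ℕ := (F₀ ∪ F₁).image (Nat.count p) with hD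
    have hmemD : ∀ m ∈ F₀ ∪ F₁, Nat.nth p (Nat.count p m) = m := by
      intro m hm
      apply Nat.nth_count
      rcases Finset.mem_union.mp hm with h | h
      · exact hM'M (hF₀ h)
      · exact hM'M (hF₁ h)
    have hDprop : ∀ d ∈ D, 2 ≤ d ∧ Even d := by
      intro d hd
      rcases Finset.mem_image.mp hd with ⟨m, hm, rfl⟩
      have hmM' : m ∈ M' := by
        rcases Finset.mem_union.mp hm with h | h
        · exact hF₀ h
        · exact hF₁ h
      rcases hmM' with ⟨j, hj, rfl⟩
      rw [hcount j]
      exact hj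
    obtain ⟨C, hDC, hCpar, _⟩ := padding D (fun d => Nat.nth p d ∈ F₀) hDprop
    have hsreal : Realized A B (C.image (Nat.nth p)) := by
      apply hall'
      intro x hx
      rcases Finset.mem_coe.mp hx with h
      rcases Finset.mem_image.mp h with ⟨c, _, rfl⟩
      exact hφmem c
    rcases hsreal with ⟨x, hx⟩
    refine ⟨x, ?_⟩
    constructor
    · simp only [Set.mem_iInter]
      intro m hm
      have hmu : m ∈ F₀ ∪ F₁ := Finset.mem_union_left _ hm
      have hd : Nat.count p m ∈ D := Finset.mem_image_of_mem _ hmu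
      have hrw : Nat.nth p (Nat.count p m) = m := hmemD m hmu
      have hmem : m ∈ C.image (Nat.nth p) := by
        rw [← hrw]
        exact Finset.mem_image_of_mem _ (hDC hd)
      have hcard : (((C.image (Nat.nth p)).filter (· < m)).card) =
          ((C.filter (· < Nat.count p m)).card) := by
        conv_lhs => rw [← hrw]
        exact filter_image_card hφmono C (Nat.count p m)
      have heven : Even (((C.image (Nat.nth p)).filter (· < m)).card) := by
        rw [hcard]
        rw [hCpar (Nat.count p m) hd, hrw]
        exact hm
      exact (hx m hmem).1 heven
    · simp only [Set.mem_iInter]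
      intro m hm
      have hmu : m ∈ F₀ ∪ F₁ := Finset.mem_union_right _ hm
      have hd : Nat.count p m ∈ D := Finset.mem_image_of_mem _ hmu
      have hrw : Nat.nth p (Nat.count p m) = m := hmemD m hmu
      have hmem : m ∈ C.image (Nat.nth p) := by
        rw [← hrw]
        exact Finset.mem_image_of_mem _ (hDC hd)
      have hcard : (((C.image (Nat.nth p)).filter (· < m)).card) =
          ((C.filter (· < Nat.count p m)).card) := by
        conv_lhs => rw [← hrw]
        exact filter_image_card hφmono C (Nat.count p m)
      have hnoteven : ¬ Even (((C.image (Nat.nth p)).filter (· < m)).card) := by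
        rw [hcard, hCpar (Nat.count p m) hd, hrw]
        exact fun h => (Finset.disjoint_right.mp hdisj hm) h
      exact (hx m hmem).2 hnoteven
  · -- convergence case
    refine ⟨M, hMM₀, hMi, ?_⟩
    rintro x ⟨hIinf, hJinf⟩
    set I : Set ℕ := {m | m ∈ M ∧ x ∈ A m} with hI
    set J : Set ℕ := {m | m ∈ M ∧ x ∈ B m} with hJ
    set pick : ℕ → Set ℕ := fun j => if Even j then I else J with hpick
    have hpickinf : ∀ j, (pick j).Infinite := by
      intro j
      by_cases hj : Even j
      · simpa only [hpick, if_pos hj] using hIinf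
      · simpa only [hpick, if_neg hj] using hJinf
    -- build a strictly monotone alternating selection
    obtain ⟨m0, hm0⟩ := hIinf.nonempty
    have hstep : ∀ st : {st : ℕ × ℕ // st.2 ∈ pick st.1},
        ∃ st' : {st : ℕ × ℕ // st.2 ∈ pick st.1},
          st'.1.1 = st.1.1 + 1 ∧ st.1.2 < st'.1.2 := by
      rintro ⟨⟨j, m⟩, hm⟩
      obtain ⟨m', hm', hmm'⟩ := (hpickinf (j + 1)).exists_gt m
      exact ⟨⟨(j + 1, m'), hm'⟩, rfl, hmm'⟩
    rcases dchelper _ (⟨(0, m0), by simpa [hpick] using hm0⟩ : {st : ℕ × ℕ // st.2 ∈ pick st.1})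
      hstep with ⟨g, hg0, hgrel⟩
    have hfst : ∀ k, (g k).1.1 = k := by
      intro k
      induction k with
      | zero => rw [hg0]
      | succ k ih => rw [(hgrel k).1, ih]
    set n : ℕ → ℕ := fun k => (g k).1.2 with hn
    have hnmono : StrictMono n := strictMono_nat_of_lt_succ (fun k => (hgrel k).2)
    have hnpick : ∀ k, n k ∈ pick k := by
      intro k
      have := (g k).2
      rwa [hfst k] at this
    have hnM : ∀ k, n k ∈ M := by
      intro k
      have h := hnpick k
      simp only [hpick] at h
      by_cases hk : Even k
      · rw [if_pos hk] at h
        exact h.1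
      · rw [if_neg hk] at h
        exact h.1
    have hNsub : Set.range n ⊆ M := by
      rintro y ⟨k, rfl⟩
      exact hnM k
    have hNinf : (Set.range n).Infinite := Set.infinite_range_of_injective hnmono.injective
    obtain ⟨t, htinit, htF⟩ := hinit (Set.range n) hNsub hNinf
    apply htF
    -- t is realized by x
    refine ⟨x, ?_⟩
    intro m hm
    obtain ⟨j, rfl⟩ := htinit.1 hm
    -- index set of t is downward closed
    have hdc : ∀ j', n j' ∈ t → ∀ i, i < j' → n i ∈ t := by
      intro j' hj' i hij'
      exact htinit.2 (n i) ⟨i, rfl⟩ (n j') hj' (le_of_lt (hnmono hij'))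
    -- compute the position of n j in t
    set S : Finset ℕ := t.preimage n (Set.injOn_of_injective hnmono.injective) with hS
    have hSt : ∀ i, i ∈ S ↔ n i ∈ t := by
      intro i
      rw [hS, Finset.mem_preimage]
    have himg : S.image n = t := by
      ext m
      simp only [Finset.mem_image]
      constructor
      · rintro ⟨i, hi, rfl⟩
        exact (hSt i).mp hi
      · intro hm'
        obtain ⟨j', rfl⟩ := htinit.1 hm'
        exact ⟨j', (hSt j').mpr hm', rfl⟩
    have hSdc : ∀ j' ∈ S, ∀ i, i < j' → i ∈ S := by
      intro j' hj' i hij'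
      rw [hSt] at hj' ⊢
      exact hdc j' hj' i hij'
    have hSrange : S = Finset.range S.card := downward_closed_eq_range hSdc
    have hjS : j ∈ S := (hSt j).mpr hm
    have hjcard : j < S.card := by
      rw [hSrange] at hjS
      simpa using hjS
    have hpos : ((t.filter (· < n j)).card) = j := by
      rw [← himg, filter_image_card hnmono S j]
      have : S.filter (· < j) = Finset.range j := by
        rw [hSrange]
        ext i
        simp only [Finset.mem_filter, Finset.mem_range]
        omega
      rw [this, Finset.card_range]
    rw [hpos]
    constructor
    · intro hje
      have h := hnpick j
      simp only [hpick] at h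
      rw [if_pos hje] at h
      exact h.2
    · intro hjo
      have h := hnpick j
      simp only [hpick] at h
      rw [if_neg hjo] at h
      exact h.2

end Rosenthal


section ListMinMax

/-- max of a nonempty list (junk value 0 for `[]`). -/
def listSup : List ℝ → ℝ
  | [] => 0
  | a :: t => t.foldr max a

def listInf : List ℝ → ℝ
  | [] => 0
  | a :: t => t.foldr min a

lemma foldr_max_mem (t : List ℝ) (a : ℝ) : t.foldr max a = a ∨ t.foldr max a ∈ t := by
  induction t with
  | nil => exact Or.inl rfl
  | cons b t ih =>
    simp only [List.foldr_cons]
    rcases le_total b (t.foldr max a) with h | h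
    · rw [max_eq_right h]
      rcases ih with h' | h'
      · exact Or.inl h'
      · exact Or.inr (List.mem_cons_of_mem b h')
    · rw [max_eq_left h]
      exact Or.inr (List.mem_cons_self (a := b) (l := t))

lemma le_foldr_max_init (t : List ℝ) (a : ℝ) : a ≤ t.foldr max a := by
  induction t with
  | nil => exact le_refl a
  | cons b t ih => exact ih.trans (le_max_right b _)

lemma le_foldr_max (t : List ℝ) (a : ℝ) {b : ℝ} (hb : b ∈ t) : b ≤ t.foldr max a := by
  induction t with
  | nil => simp at hb
  | cons c t ih =>
    rcases List.mem_cons.mp hb with rfl | hb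
    · exact le_max_left _ _
    · exact (ih hb).trans (le_max_right c _)

lemma listSup_mem {l : List ℝ} (h : l ≠ []) : listSup l ∈ l := by
  cases l with
  | nil => exact absurd rfl h
  | cons a t =>
    rcases foldr_max_mem t a with h' | h'
    · rw [listSup, h']
      exact List.mem_cons_self (a := a) (l := t)
    · rw [listSup]
      exact List.mem_cons_of_mem a h'

lemma le_listSup {l : List ℝ} {b : ℝ} (hb : b ∈ l) : b ≤ listSup l := by
  cases l with
  | nil => simp at hb
  | cons a t =>
    rcases List.mem_cons.mp hb with rfl | hb
    · exact le_foldr_max_init t b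
    · exact le_foldr_max t a hb

lemma foldr_min_mem (t : List ℝ) (a : ℝ) : t.foldr min a = a ∨ t.foldr min a ∈ t := by
  induction t with
  | nil => exact Or.inl rfl
  | cons b t ih =>
    simp only [List.foldr_cons]
    rcases le_total b (t.foldr min a) with h | h
    · rw [min_eq_left h]
      exact Or.inr (List.mem_cons_self (a := b) (l := t))
    · rw [min_eq_right h]
      rcases ih with h' | h'
      · exact Or.inl h'
      · exact Or.inr (List.mem_cons_of_mem b h')

lemma foldr_min_le_init (t : List ℝ) (a : ℝ) : t.foldr min a ≤ a := by
  induction t with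
  | nil => exact le_refl a
  | cons b t ih => exact (min_le_right b _).trans ih

lemma foldr_min_le (t : List ℝ) (a : ℝ) {b : ℝ} (hb : b ∈ t) : t.foldr min a ≤ b := by
  induction t with
  | nil => simp at hb
  | cons c t ih =>
    rcases List.mem_cons.mp hb with rfl | hb
    · exact min_le_left _ _
    · exact (min_le_right c _).trans (ih hb)

lemma listInf_mem {l : List ℝ} (h : l ≠ []) : listInf l ∈ l := by
  cases l with
  | nil => exact absurd rfl h
  | cons a t =>
    rcases foldr_min_mem t a with h' | h'
    · rw [listInf, h']
      exact List.mem_cons_self (a := a) (l := t)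
    · rw [listInf]
      exact List.mem_cons_of_mem a h'

lemma listInf_le {l : List ℝ} {b : ℝ} (hb : b ∈ l) : listInf l ≤ b := by
  cases l with
  | nil => simp at hb
  | cons a t =>
    rcases List.mem_cons.mp hb with rfl | hb
    · exact foldr_min_le_init t b
    · exact foldr_min_le t a hb

lemma continuous_foldr_max {K : Type*} [TopologicalSpace K] (l : List K₀)
    {F : K₀ → K → ℝ} {I : K → ℝ} (hF : ∀ y ∈ l, Continuous (F y)) (hI : Continuous I) :
    Continuous (fun z => (l.map (fun y => F y z)).foldr max (I z)) := by
  induction l with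
  | nil => simpa using hI
  | cons a t ih =>
    simp only [List.map_cons, List.foldr_cons]
    exact (hF a (List.mem_cons_self (a := a) (l := t))).max
      (ih (fun y hy => hF y (List.mem_cons_of_mem a hy)))

lemma continuous_listSup_map {K₀ : Type*} {K : Type*} [TopologicalSpace K] (l : List K₀)
    {F : K₀ → K → ℝ} (hF : ∀ y ∈ l, Continuous (F y)) :
    Continuous (fun z => listSup (l.map (fun y => F y z))) := by
  cases l with
  | nil => simpa [listSup] using continuous_const
  | cons a t =>
    simp only [List.map_cons, listSup]
    exact continuous_foldr_max t (fun y hy => hF y (List.mem_cons_of_mem a hy))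
      (hF a (List.mem_cons_self (a := a) (l := t)))

lemma list_range_getD_map {β γ : Type*} (l : List β) (d : β) (f : β → γ) :
    (List.range l.length).map (fun i => f (l.getD i d)) = l.map f := by
  induction l with
  | nil => simp
  | cons a t ih =>
    rw [List.length_cons, List.range_succ_eq_map, List.map_cons, List.map_map, List.map_cons]
    congr 1

end ListMinMax


section Approx

/-- affine evaluation -/
def aff (c : ℚ × ℚ) (t : ℝ) : ℝ := (c.1 : ℝ) * t + (c.2 : ℝ)

/-- min-max evaluation of a matrix of affine functions of given values -/
def FEval (coeff : ℕ → ℕ → ℚ × ℚ) (rows : ℕ) (cols : ℕ → ℕ) (v : ℕ → ℕ → ℝ) : ℝ :=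
  listInf ((List.range rows).map fun ii =>
    listSup ((List.range (cols ii)).map fun jj => aff (coeff ii jj) (v ii jj)))

variable {K : Type*} [TopologicalSpace K] [CompactSpace K] {Γ : Type}

lemma two_point [Nonempty Γ] (i : K → Γ → unitInterval)
    (hinj : Function.Injective i) (G : K → ℝ) {η : ℝ} (hη : 0 < η) (x y : K) :
    ∃ (c : ℚ × ℚ) (γ : Γ), c.1 ≠ 0 ∧ |aff c (i x γ : ℝ) - G x| < η ∧
      |aff c (i y γ : ℝ) - G y| < η := by
  have habs : ∀ (a₀ b₀ : ℝ) (t : ℝ), t ∈ Set.Icc (0:ℝ) 1 → ∀ (a b : ℚ),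
      |(a:ℝ) - a₀| < η/4 → |(b:ℝ) - b₀| < η/4 → |(a:ℝ) * t + b - (a₀ * t + b₀)| < η/2 := by
    intro a₀ b₀ t ht a b ha hb
    have h1 : |(a:ℝ) * t - a₀ * t| = |(a:ℝ) - a₀| * |t| := by
      rw [← abs_mul]
      ring_nf
    have h2 : |t| ≤ 1 := by
      rw [abs_le]
      exact ⟨by linarith [ht.1], ht.2⟩
    calc |(a:ℝ) * t + b - (a₀ * t + b₀)| ≤ |(a:ℝ) * t - a₀ * t| + |(b:ℝ) - b₀| := by
          have : (a:ℝ) * t + b - (a₀ * t + b₀) = ((a:ℝ) * t - a₀ * t) + ((b:ℝ) - b₀) := by ring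
          rw [this]
          exact abs_add_le _ _
      _ ≤ |(a:ℝ) - a₀| * |t| + |(b:ℝ) - b₀| := by rw [h1]
      _ ≤ |(a:ℝ) - a₀| * 1 + |(b:ℝ) - b₀| := by
          have := abs_nonneg ((a:ℝ) - a₀)
          nlinarith
      _ < η/2 := by linarith
  have hratnz : ∀ a₀ : ℝ, ∃ a : ℚ, (a:ℚ) ≠ 0 ∧ |(a:ℝ) - a₀| < η/4 := by
    intro a₀
    by_cases h0 : a₀ = 0
    · obtain ⟨q, hq1, hq2⟩ := exists_rat_btwn (by linarith : (0:ℝ) < η/4)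
      refine ⟨q, ?_, ?_⟩
      · intro h
        rw [h] at hq1
        exact lt_irrefl _ (by exact_mod_cast hq1)
      · rw [h0, sub_zero, abs_of_pos (by exact_mod_cast hq1)]
        exact hq2
    · obtain ⟨q, hq⟩ := exists_rat_near a₀ (lt_min (by linarith : (0:ℝ) < η/4)
        (abs_pos.mpr h0))
      rw [abs_sub_comm] at hq
      refine ⟨q, ?_, lt_of_lt_of_le hq (min_le_left _ _)⟩
      intro h
      rw [h] at hq
      simp only [Rat.cast_zero, zero_sub, abs_neg] at hq
      exact lt_irrefl _ (lt_of_le_of_lt (min_le_right _ _) hq)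
  by_cases hxy : x = y
  · subst hxy
    obtain ⟨a, ha0, ha⟩ := hratnz 0
    obtain ⟨b, hb0, hb⟩ := hratnz (G x)
    refine ⟨(a, b), Classical.arbitrary Γ, ha0, ?_, ?_⟩ <;>
    · have := habs 0 (G x) (i x (Classical.arbitrary Γ) : ℝ)
        ⟨(i x (Classical.arbitrary Γ)).2.1, (i x (Classical.arbitrary Γ)).2.2⟩ a b ha hb
      rw [zero_mul, zero_add] at this
      calc |aff (a, b) (i x (Classical.arbitrary Γ) : ℝ) - G x| < η/2 := this
        _ < η := by linarith
  · have hne : i x ≠ i y := fun h => hxy (hinj h)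
    obtain ⟨γ, hγ⟩ := Function.ne_iff.mp hne
    set t₁ : ℝ := (i x γ : ℝ) with ht₁
    set t₂ : ℝ := (i y γ : ℝ) with ht₂
    have htne : t₁ ≠ t₂ := by
      intro h
      exact hγ (Subtype.ext h)
    set a₀ : ℝ := (G x - G y)/(t₁ - t₂) with ha₀
    set b₀ : ℝ := G x - a₀ * t₁ with hb₀
    have hx0 : a₀ * t₁ + b₀ = G x := by
      rw [hb₀]
      ring
    have hy0 : a₀ * t₂ + b₀ = G y := by
      have hsub : t₁ - t₂ ≠ 0 := sub_ne_zero.mpr htne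
      have hkey : a₀ * (t₁ - t₂) = G x - G y := by
        rw [ha₀, div_mul_cancel₀ _ hsub]
      rw [mul_sub] at hkey
      rw [hb₀]
      linarith
    obtain ⟨a, ha0, ha⟩ := hratnz a₀
    obtain ⟨b, hb0, hb⟩ := hratnz b₀
    refine ⟨(a, b), γ, ha0, ?_, ?_⟩
    · have := habs a₀ b₀ t₁ ⟨(i x γ).2.1, (i x γ).2.2⟩ a b ha hb
      rw [hx0] at this
      calc |aff (a, b) t₁ - G x| < η/2 := this
        _ < η := by linarith
    · have := habs a₀ b₀ t₂ ⟨(i y γ).2.1, (i y γ).2.2⟩ a b ha hb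
      rw [hy0] at this
      calc |aff (a, b) t₂ - G y| < η/2 := this
        _ < η := by linarith

lemma maxmin_approx [Nonempty K] [Nonempty Γ] (i : K → Γ → unitInterval)
    (hic : ∀ γ : Γ, Continuous fun x : K => (i x γ : ℝ))
    (hinj : Function.Injective i) (G : K → ℝ) (hG : Continuous G) {η : ℝ} (hη : 0 < η) :
    ∃ (rows : ℕ) (cols : ℕ → ℕ) (coeff : ℕ → ℕ → ℚ × ℚ) (α : ℕ → ℕ → Γ),
      0 < rows ∧ (∀ ii, 0 < cols ii) ∧ (∀ ii jj, (coeff ii jj).1 ≠ 0) ∧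
      ∀ x : K, |G x - FEval coeff rows cols (fun ii jj => (i x (α ii jj) : ℝ))| < η := by
  classical
  -- two-point data
  have h2p : ∀ x y : K, ∃ (c : ℚ × ℚ) (γ : Γ), c.1 ≠ 0 ∧
      |aff c (i x γ : ℝ) - G x| < η ∧ |aff c (i y γ : ℝ) - G y| < η :=
    fun x y => two_point i hinj G hη x y
  choose cd γd hcd0 hcdx hcdy using h2p
  set h : K → K → K → ℝ := fun x y z => aff (cd x y) (i z (γd x y) : ℝ) with hh
  have hhc : ∀ x y, Continuous (h x y) := by
    intro x y
    apply Continuous.add (Continuous.mul continuous_const (hic (γd x y))) continuous_const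
  -- inner cover for fixed x
  have hinner : ∀ x : K, ∃ T : List K, T ≠ [] ∧
      (∀ z : K, G z - η < listSup (T.map (fun y => h x y z))) ∧
      listSup (T.map (fun y => h x y x)) < G x + η := by
    intro x
    have hVopen : ∀ y : K, IsOpen {z : K | G z - η < h x y z} :=
      fun y => isOpen_lt (by continuity) (hhc x y)
    have hVcover : (Set.univ : Set K) ⊆ ⋃ y : K, {z : K | G z - η < h x y z} := by
      intro z _
      refine Set.mem_iUnion.mpr ⟨z, ?_⟩
      have := hcdy x z
      rw [Set.mem_setOf_eq]
      have h1 := abs_lt.mp this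
      linarith [h1.1]
    obtain ⟨T₀, hT₀⟩ := isCompact_univ.elim_finite_subcover _ hVopen hVcover
    refine ⟨x :: T₀.toList, by simp, ?_, ?_⟩
    · intro z
      have hz := hT₀ (Set.mem_univ z)
      simp only [Set.mem_iUnion] at hz
      obtain ⟨y, hyT₀, hy⟩ := hz
      rw [Set.mem_setOf_eq] at hy
      have hmem : h x y z ∈ (x :: T₀.toList).map (fun y => h x y z) :=
        List.mem_map_of_mem (List.mem_cons_of_mem x (Finset.mem_toList.mpr hyT₀))
      exact lt_of_lt_of_le hy (le_listSup hmem)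
    · have hmem := listSup_mem (l := (x :: T₀.toList).map (fun y => h x y x)) (by simp)
      obtain ⟨y, hy, heq⟩ := List.mem_map.mp hmem
      rw [← heq]
      have h1 := abs_lt.mp (hcdx x y)
      linarith [h1.2]
  choose T hTne hTlow hThigh using hinner
  set H : K → K → ℝ := fun x z => listSup ((T x).map (fun y => h x y z)) with hH
  have hHc : ∀ x, Continuous (H x) := by
    intro x
    exact continuous_listSup_map (T x) (fun y _ => hhc x y)
  -- outer cover
  have hUopen : ∀ x : K, IsOpen {z : K | H x z < G z + η} :=
    fun x => isOpen_lt (hHc x) (by continuity)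
  have hUcover : (Set.univ : Set K) ⊆ ⋃ x : K, {z : K | H x z < G z + η} := by
    intro z _
    exact Set.mem_iUnion.mpr ⟨z, hThigh z⟩
  obtain ⟨S₀, hS₀⟩ := isCompact_univ.elim_finite_subcover _ hUopen hUcover
  obtain ⟨x₀⟩ := ‹Nonempty K›
  set ls : List K := x₀ :: S₀.toList with hls
  -- final function
  have hFlow : ∀ z : K, G z - η < listInf (ls.map (fun x => H x z)) := by
    intro z
    have hmem := listInf_mem (l := ls.map (fun x => H x z)) (by simp [hls])
    obtain ⟨x, hx, heq⟩ := List.mem_map.mp hmem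
    rw [← heq]
    exact hTlow x z
  have hFhigh : ∀ z : K, listInf (ls.map (fun x => H x z)) < G z + η := by
    intro z
    have hz := hS₀ (Set.mem_univ z)
    simp only [Set.mem_iUnion] at hz
    obtain ⟨x, hxS₀, hx⟩ := hz
    rw [Set.mem_setOf_eq] at hx
    have hmem : H x z ∈ ls.map (fun x => H x z) :=
      List.mem_map_of_mem (List.mem_cons_of_mem x₀ (Finset.mem_toList.mpr hxS₀))
    exact lt_of_le_of_lt (listInf_le hmem) hx
  -- re-index as FEval
  refine ⟨ls.length, fun ii => (T (ls.getD ii x₀)).length,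
    fun ii jj => cd (ls.getD ii x₀) ((T (ls.getD ii x₀)).getD jj x₀),
    fun ii jj => γd (ls.getD ii x₀) ((T (ls.getD ii x₀)).getD jj x₀),
    by simp [hls], fun ii => List.length_pos_iff.mpr (hTne _), fun ii jj => hcd0 _ _, ?_⟩
  intro z
  have hFeq : FEval (fun ii jj => cd (ls.getD ii x₀) ((T (ls.getD ii x₀)).getD jj x₀))
      ls.length (fun ii => (T (ls.getD ii x₀)).length)
      (fun ii jj => (i z (γd (ls.getD ii x₀) ((T (ls.getD ii x₀)).getD jj x₀)) : ℝ)) =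
      listInf (ls.map (fun x => H x z)) := by
    rw [FEval]
    congr 1
    have houter : ∀ x : K, listSup ((List.range (T x).length).map
        (fun jj => aff (cd x ((T x).getD jj x₀)) (i z (γd x ((T x).getD jj x₀)) : ℝ))) =
        H x z := by
      intro x
      rw [hH]
      congr 1
      exact list_range_getD_map (T x) x₀ (fun y => h x y z)
    calc (List.range ls.length).map (fun ii =>
          listSup ((List.range ((T (ls.getD ii x₀)).length)).map
            (fun jj => aff (cd (ls.getD ii x₀) ((T (ls.getD ii x₀)).getD jj x₀))
              (i z (γd (ls.getD ii x₀) ((T (ls.getD ii x₀)).getD jj x₀)) : ℝ)))) =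
        (List.range ls.length).map (fun ii => H (ls.getD ii x₀) z) := by
          apply List.map_congr_left
          intro ii _
          exact houter (ls.getD ii x₀)
      _ = ls.map (fun x => H x z) := list_range_getD_map ls x₀ (fun x => H x z)
  rw [hFeq]
  have h1 := hFlow z
  have h2 := hFhigh z
  rw [abs_lt]
  constructor <;> linarith

end Approx


section Helpers

lemma pigeonhole_infinite (S : Set ℕ) (hS : S.Infinite) (g : ℕ → ℕ) (N : ℕ)
    (hb : ∀ l ∈ S, g l < N) : ∃ v, v < N ∧ {l | l ∈ S ∧ g l = v}.Infinite := by
  by_contra h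
  push_neg at h
  have hfin : ∀ v ∈ Finset.range N, {l | l ∈ S ∧ g l = v}.Finite := by
    intro v hv
    by_contra hinf
    exact hinf (h v (Finset.mem_range.mp hv))
  have hcover : S ⊆ ⋃ v ∈ Finset.range N, {l | l ∈ S ∧ g l = v} := by
    intro l hl
    simp only [Set.mem_iUnion]
    exact ⟨g l, by simpa using hb l hl, hl, rfl⟩
  exact hS (Set.Finite.subset (Set.Finite.biUnion (Finset.range N).finite_toSet hfin) hcover)

lemma iterate_rd {X : Type*} (AA BB : (ℕ × ℕ) → ℕ → Set X) (sl : List (ℕ × ℕ))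
    (h : ∀ σ ∈ sl, ∀ M : Set ℕ, M.Infinite → ¬ IndepPairs (AA σ) (BB σ) M)
    (M₀ : Set ℕ) (hM₀ : M₀.Infinite) :
    ∃ M, M ⊆ M₀ ∧ M.Infinite ∧ ∀ σ ∈ sl, ∀ x : X,
      ¬ ({m | m ∈ M ∧ x ∈ AA σ m}.Infinite ∧ {m | m ∈ M ∧ x ∈ BB σ m}.Infinite) := by
  induction sl generalizing M₀ with
  | nil => exact ⟨M₀, fun _ hx => hx, hM₀, by simp⟩
  | cons σ sl' ih =>
    obtain ⟨M₁, hM₁sub, hM₁inf, hM₁conv⟩ := rosenthal (AA σ) (BB σ) M₀ hM₀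
      (fun M _ hMi => h σ (List.mem_cons_self (a := σ) (l := sl')) M hMi)
    obtain ⟨M, hMsub, hMinf, hMconv⟩ := ih
      (fun τ hτ => h τ (List.mem_cons_of_mem σ hτ)) M₁ hM₁inf
    refine ⟨M, hMsub.trans hM₁sub, hMinf, ?_⟩
    intro τ hτ x
    rcases List.mem_cons.mp hτ with rfl | hτ
    · intro ⟨h1, h2⟩
      refine hM₁conv x ⟨h1.mono ?_, h2.mono ?_⟩ <;>
        exact fun l hl => ⟨hMsub hl.1, hl.2⟩
    · exact hMconv τ hτ x

lemma FEval_congr (c₁ c₂ : ℕ → ℕ → ℚ × ℚ) (r : ℕ) (k₁ k₂ : ℕ → ℕ) (v₁ v₂ : ℕ → ℕ → ℝ)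
    (hk : ∀ ii < r, k₁ ii = k₂ ii)
    (hc : ∀ ii < r, ∀ jj < k₁ ii, c₁ ii jj = c₂ ii jj)
    (hv : ∀ ii < r, ∀ jj < k₁ ii, v₁ ii jj = v₂ ii jj) :
    FEval c₁ r k₁ v₁ = FEval c₂ r k₂ v₂ := by
  rw [FEval, FEval]
  congr 1
  apply List.map_congr_left
  intro ii hii
  rw [List.mem_range] at hii
  rw [← hk ii hii]
  congr 1
  apply List.map_congr_left
  intro jj hjj
  rw [List.mem_range] at hjj
  rw [hc ii hii jj hjj, hv ii hii jj hjj]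

lemma getD_map_range {β : Type*} (n : ℕ) (g : ℕ → β) (d : β) {ii : ℕ} (h : ii < n) :
    ((List.range n).map g).getD ii d = g ii := by
  rw [List.getD_eq_getElem _ _ (by simpa using h)]
  simp

lemma mem_of_getD {β : Type*} (l : List β) (d : β) {ii : ℕ} (h : ii < l.length) :
    l.getD ii d ∈ l := by
  rw [List.getD_eq_getElem _ _ h]
  exact List.getElem_mem h

/-- coefficient bound of a rational coefficient matrix -/
def Abd (e₀ : List (List (ℚ × ℚ))) : ℝ :=
  ((e₀.flatMap id).map (fun c => |(c.1 : ℝ)|)).foldr max 1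

lemma one_le_Abd (e₀ : List (List (ℚ × ℚ))) : 1 ≤ Abd e₀ := le_foldr_max_init _ _

lemma Abd_pos (e₀ : List (List (ℚ × ℚ))) : 0 < Abd e₀ := lt_of_lt_of_le one_pos (one_le_Abd e₀)

lemma abs_le_Abd (e₀ : List (List (ℚ × ℚ))) {row : List (ℚ × ℚ)} {c : ℚ × ℚ}
    (hrow : row ∈ e₀) (hc : c ∈ row) : |(c.1 : ℝ)| ≤ Abd e₀ := by
  apply le_foldr_max
  apply List.mem_map_of_mem
  rw [List.mem_flatMap]
  exact ⟨row, hrow, hc⟩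

end Helpers


end QWRNAux

namespace QWRNAux

lemma isQWRN_of_subsingleton {L : Type*} [TopologicalSpace L] [CompactSpace L] [T2Space L]
    (h : ∀ y₁ y₂ : L, y₁ = y₂) : IsQWRN L := by
  refine ⟨PUnit, fun _ _ => 0, (Continuous.isClosedEmbedding continuous_const
    (fun y₁ y₂ _ => h y₁ y₂)).isEmbedding, ?_⟩
  intro ε hε
  refine ⟨fun _ => Set.univ, Set.iUnion_const _, ?_⟩
  rintro n p q hpq ⟨φ, -, hind⟩
  obtain ⟨y0, hy0⟩ := hind 1 (fun _ => false)
  obtain ⟨y1, hy1⟩ := hind 1 (fun _ => true)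
  have hp : ((0 : unitInterval) : ℝ) < p := by
    have := Set.mem_iInter.mp hy0 ⟨0, by omega⟩
    simpa using this
  have hq : ((0 : unitInterval) : ℝ) > q := by
    have := Set.mem_iInter.mp hy1 ⟨0, by omega⟩
    simpa using this
  rw [Set.Icc.coe_zero] at hp hq
  linarith

theorem isQWRN_of_continuous_surjection'
    {K L : Type*} [TopologicalSpace K] [TopologicalSpace L]
    [CompactSpace K] [T2Space K] [CompactSpace L] [T2Space L]
    (f : K → L) (hf : Continuous f) (hsurj : Function.Surjective f)
    (hK : IsQWRN K) : IsQWRN L := by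
  classical
  by_cases htriv : ∀ y₁ y₂ : L, y₁ = y₂
  · exact isQWRN_of_subsingleton htriv
  obtain ⟨Γ, i, hiemb, hQ⟩ := hK
  push_neg at htriv
  obtain ⟨y₁, y₂, hy12⟩ := htriv
  have hiinj : Function.Injective i := hiemb.injective
  have hicont : Continuous i := hiemb.continuous
  have hic : ∀ γ : Γ, Continuous fun x : K => (i x γ : ℝ) :=
    fun γ => continuous_subtype_val.comp ((continuous_apply γ).comp hicont)
  obtain ⟨x₁, hx₁⟩ := hsurj y₁
  have hKne : Nonempty K := ⟨x₁⟩
  have hLne : Nonempty L := ⟨y₁⟩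
  have hΓne : Nonempty Γ := by
    by_contra hΓ
    rw [not_nonempty_iff] at hΓ
    obtain ⟨x₂, hx₂⟩ := hsurj y₂
    apply hy12
    rw [← hx₁, ← hx₂]
    congr 1
    apply hiinj
    funext γ
    exact hΓ.elim γ
  set P : ((Γ → unitInterval) → unitInterval) → Prop :=
    fun u => ∃ g : L → unitInterval, Continuous g ∧ ∀ x : K, u (i x) = g (f x) with hPdef
  have hgspec : ∀ u : {u // P u}, Continuous (Classical.choose u.2) ∧
      ∀ x : K, u.1 (i x) = (Classical.choose u.2) (f x) :=
    fun u => Classical.choose_spec u.2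
  have hgagree : ∀ (u : {u // P u}) (g : L → unitInterval),
      (∀ x : K, u.1 (i x) = g (f x)) → ∀ y, Classical.choose u.2 y = g y := by
    intro u g hg y
    obtain ⟨x, rfl⟩ := hsurj y
    rw [← (hgspec u).2 x, hg x]
  have hjcont : Continuous (fun y (u : {u // P u}) => (Classical.choose u.2) y) :=
    continuous_pi fun u => (hgspec u).1
  have hjinj : Function.Injective (fun y (u : {u // P u}) => (Classical.choose u.2) y) := by
    intro z₁ z₂ hz
    by_contra hne
    obtain ⟨g0, hg01, hg02, hg0m⟩ := exists_continuous_zero_one_of_isClosed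
      (isClosed_singleton (x := z₁)) (isClosed_singleton (x := z₂))
      (by simpa [Set.disjoint_singleton] using hne)
    set gI : L → unitInterval := fun y => ⟨g0 y, hg0m y⟩ with hgI
    have hgIc : Continuous gI := Continuous.subtype_mk (map_continuous g0) _
    have hueq : ∀ x : K, (fun v => gI (f (Function.invFun i v))) (i x) = gI (f x) := by
      intro x
      simp only
      rw [Function.leftInverse_invFun hiinj x]
    set u : {u // P u} := ⟨fun v => gI (f (Function.invFun i v)), ⟨gI, hgIc, hueq⟩⟩ with hu
    have h1 : Classical.choose u.2 z₁ = gI z₁ := hgagree u gI hueq z₁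
    have h2 : Classical.choose u.2 z₂ = gI z₂ := hgagree u gI hueq z₂
    have h3 := congrFun hz u
    simp only at h3
    rw [h1, h2] at h3
    have h4 : g0 z₁ = g0 z₂ := by
      have := Subtype.ext_iff.mp h3
      simpa [hgI] using this
    rw [hg01 (Set.mem_singleton z₁), hg02 (Set.mem_singleton z₂)] at h4
    simp at h4
  refine ⟨{u // P u}, fun y u => (Classical.choose u.2) y,
    (Continuous.isClosedEmbedding hjcont hjinj).isEmbedding, ?_⟩
  intro ε hε
  -- decomposition families, one for each coefficient skeleton
  have hQ' : ∀ e₀ : List (List (ℚ × ℚ)), ∃ Γs : ℕ → Set Γ, (⋃ n, Γs n) = Set.univ ∧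
      ∀ n : ℕ, ∀ p q : ℝ, q - p > ε / (4 * Abd e₀) → ¬∃ φ : ℕ → Γ, (∀ m, φ m ∈ Γs n) ∧
        IsIndependentSeq (fun m => {x : K | (i x (φ m) : ℝ) < p})
          (fun m => {x : K | (i x (φ m) : ℝ) > q}) := by
    intro e₀
    exact hQ (ε / (4 * Abd e₀)) (div_pos hε (by linarith [Abd_pos e₀]))
  choose ΓsK hcov hnind using hQ'
  set skel : List (List ((ℚ × ℚ) × ℕ)) → List (List (ℚ × ℚ)) :=
    fun e => e.map (fun row => row.map Prod.fst) with hskel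
  set Class : List (List ((ℚ × ℚ) × ℕ)) → Set {u // P u} := fun e =>
    {u | ∃ α : ℕ → ℕ → Γ,
      (∀ ii, ii < e.length → ∀ jj, jj < (e.getD ii []).length →
        α ii jj ∈ ΓsK (skel e) (((e.getD ii []).getD jj ((1, 0), 0)).2)) ∧
      0 < e.length ∧
      (∀ ii, ii < e.length → 0 < (e.getD ii []).length) ∧
      (∀ ii, ii < e.length → ∀ jj, jj < (e.getD ii []).length →
        (((e.getD ii []).getD jj ((1, 0), 0)).1).1 ≠ 0) ∧
      ∀ x : K, |((Classical.choose u.2) (f x) : ℝ) -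
        FEval (fun ii jj => ((e.getD ii []).getD jj ((1, 0), 0)).1) e.length
          (fun ii => (e.getD ii []).length) (fun ii jj => (i x (α ii jj) : ℝ))| ≤ ε / 4}
    with hClass
  obtain ⟨eN, heN⟩ := exists_surjective_nat (List (List ((ℚ × ℚ) × ℕ)))
  refine ⟨fun n => Class (eN n), ?_, ?_⟩
  · -- covering
    apply Set.eq_univ_of_forall
    intro u
    rw [Set.mem_iUnion]
    have hGc : Continuous fun x : K => ((Classical.choose u.2) (f x) : ℝ) :=
      continuous_subtype_val.comp ((hgspec u).1.comp hf)
    obtain ⟨rows, cols, coeff, α, hr, hc, hnz, happ⟩ := maxmin_approx i hic hiinj _ hGc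
      (by positivity : (0 : ℝ) < ε / 4)
    set e₀ : List (List (ℚ × ℚ)) :=
      (List.range rows).map (fun ii => (List.range (cols ii)).map (coeff ii)) with he₀
    have hpieces : ∀ ii jj, ∃ nn, α ii jj ∈ ΓsK e₀ nn := by
      intro ii jj
      have h2 : α ii jj ∈ ⋃ nn, ΓsK e₀ nn := by
        rw [hcov e₀]
        exact Set.mem_univ _
      simpa [Set.mem_iUnion] using h2
    choose pc hpc using hpieces
    set e : List (List ((ℚ × ℚ) × ℕ)) :=
      (List.range rows).map (fun ii => (List.range (cols ii)).map
        (fun jj => (coeff ii jj, pc ii jj))) with he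
    obtain ⟨n, hn⟩ := heN e
    refine ⟨n, ?_⟩
    rw [hn]
    simp only [hClass, Set.mem_setOf_eq]
    have hskele : skel e = e₀ := by
      simp only [hskel, he, he₀, List.map_map]
      apply List.map_congr_left
      intro ii _
      simp [List.map_map, Function.comp]
    have hlen : e.length = rows := by
      rw [he]
      simp
    have hrowlen : ∀ ii, ii < rows → (e.getD ii []).length = cols ii := by
      intro ii hii
      rw [he, getD_map_range _ _ _ hii]
      simp
    have hentry : ∀ ii, ii < rows → ∀ jj, jj < cols ii →
        (e.getD ii []).getD jj ((1, 0), 0) = (coeff ii jj, pc ii jj) := by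
      intro ii hii jj hjj
      rw [he, getD_map_range _ _ _ hii, getD_map_range _ _ _ hjj]
    refine ⟨α, ?_, ?_, ?_, ?_, ?_⟩
    · intro ii hii jj hjj
      rw [hlen] at hii
      rw [hrowlen ii hii] at hjj
      rw [hentry ii hii jj hjj, hskele]
      exact hpc ii jj
    · rw [hlen]
      exact hr
    · intro ii hii
      rw [hlen] at hii
      rw [hrowlen ii hii]
      exact hc ii
    · intro ii hii jj hjj
      rw [hlen] at hii
      rw [hrowlen ii hii] at hjj
      rw [hentry ii hii jj hjj]
      exact hnz ii jj
    · intro x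
      have hcongr : FEval (fun ii jj => ((e.getD ii []).getD jj ((1, 0), 0)).1) e.length
          (fun ii => (e.getD ii []).length) (fun ii jj => (i x (α ii jj) : ℝ)) =
          FEval coeff rows cols (fun ii jj => (i x (α ii jj) : ℝ)) := by
        rw [hlen]
        apply FEval_congr
        · intro ii hii
          exact hrowlen ii hii
        · intro ii hii jj hjj
          rw [hrowlen ii hii] at hjj
          rw [hentry ii hii jj hjj]
        · intro ii hii jj hjj
          rfl
      rw [hcongr]
      exact le_of_lt (happ x)
  · -- no independent sequences within a class
    rintro n p q hpq ⟨φ, hφmem, hφind⟩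
    set e : List (List ((ℚ × ℚ) × ℕ)) := eN n with hedef
    set e₀ : List (List (ℚ × ℚ)) := skel e with he₀def
    set rows : ℕ := e.length with hrowsdef
    set cols : ℕ → ℕ := fun ii => (e.getD ii []).length with hcolsdef
    set cf : ℕ → ℕ → ℚ × ℚ := fun ii jj => ((e.getD ii []).getD jj ((1, 0), 0)).1 with hcfdef
    set pidx : ℕ → ℕ → ℕ := fun ii jj => ((e.getD ii []).getD jj ((1, 0), 0)).2 with hpidxdef
    set δ : ℝ := ε / (4 * Abd e₀) with hδdef
    have hδpos : 0 < δ := div_pos hε (by linarith [Abd_pos e₀])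
    simp only [hClass, Set.mem_setOf_eq] at hφmem
    choose αm hα hrpos hcpos hnz happ using hφmem
    have hr0 : 0 < rows := hrpos 0
    have hc0 : ∀ ii, ii < rows → 0 < cols ii := hcpos 0
    have hnz0 : ∀ ii, ii < rows → ∀ jj, jj < cols ii → ((cf ii jj).1 : ℚ) ≠ 0 := hnz 0
    have hAbd : ∀ ii, ii < rows → ∀ jj, jj < cols ii → |((cf ii jj).1 : ℝ)| ≤ Abd e₀ := by
      intro ii hii jj hjj
      apply abs_le_Abd e₀ (row := (e.getD ii []).map Prod.fst)
      · simp only [he₀def, hskel]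
        exact List.mem_map_of_mem (mem_of_getD e [] hii)
      · exact List.mem_map_of_mem (f := Prod.fst) (mem_of_getD _ _ hjj)
    set hfn : ℕ → ℕ → ℕ → K → ℝ :=
      fun m ii jj x => aff (cf ii jj) (i x (αm m ii jj) : ℝ) with hhfn
    have hfnc : ∀ m ii jj, Continuous (hfn m ii jj) := by
      intro m ii jj
      simp only [hhfn, aff]
      exact Continuous.add (Continuous.mul continuous_const (hic _)) continuous_const
    set p' : ℝ := p + ε / 4 with hp'def
    set q' : ℝ := q - ε / 4 with hq'def
    have hp'q' : q' - p' > ε / 2 := by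
      rw [hp'def, hq'def]
      linarith
    set CC : ℕ → Set K := fun m =>
      {x | ∃ ii, ii < rows ∧ ∀ jj, jj < cols ii → hfn m ii jj x ≤ p'} with hCCdef
    set DD : ℕ → Set K := fun m =>
      {x | ∀ ii, ii < rows → ∃ jj, jj < cols ii ∧ q' ≤ hfn m ii jj x} with hDDdef
    -- the pairs (CC, DD) form an independent family over K
    have hKind : IndepPairs CC DD Set.univ := by
      intro F₀ F₁ hF₀ hF₁ hdisj
      set nn : ℕ := (F₀ ∪ F₁).sup id + 1 with hnn
      have hlt : ∀ m ∈ F₀ ∪ F₁, m < nn := by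
        intro m hm
        have h := Finset.le_sup (f := id) hm
        simp only [id_eq] at h
        omega
      obtain ⟨y, hy⟩ := hφind nn (fun k => decide ((k : ℕ) ∈ F₁))
      obtain ⟨x, rfl⟩ := hsurj y
      have hyA : ∀ m ∈ F₀, ((Classical.choose (φ m).2) (f x) : ℝ) < p := by
        intro m hm
        have hmlt := hlt m (Finset.mem_union_left _ hm)
        have hmem := Set.mem_iInter.mp hy ⟨m, hmlt⟩
        have hnotF₁ : m ∉ F₁ := Finset.disjoint_left.mp hdisj hm
        rw [if_neg (by simpa using hnotF₁)] at hmem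
        exact hmem
      have hyB : ∀ m ∈ F₁, ((Classical.choose (φ m).2) (f x) : ℝ) > q := by
        intro m hm
        have hmlt := hlt m (Finset.mem_union_right _ hm)
        have hmem := Set.mem_iInter.mp hy ⟨m, hmlt⟩
        rw [if_pos (by simpa using hm)] at hmem
        exact hmem
      refine ⟨x, Set.mem_inter ?_ ?_⟩
      · apply Set.mem_iInter₂.mpr
        intro m hm
        have happx := happ m x
        have hlow : FEval cf rows cols (fun ii jj => (i x (αm m ii jj) : ℝ)) < p' := by
          have h1 := hyA m hm
          have h2 := abs_le.mp happx
          rw [hp'def]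
          linarith [h2.1, h2.2]
        -- extract a row
        have hne : ((List.range rows).map fun ii =>
            listSup ((List.range (cols ii)).map fun jj =>
              aff (cf ii jj) ((i x (αm m ii jj)) : ℝ))) ≠ [] := by
          simp only [ne_eq, List.map_eq_nil_iff, List.range_eq_nil]
          omega
        have hmem2 := listInf_mem hne
        rw [← FEval] at hmem2
        obtain ⟨ii, hii, heq⟩ := List.mem_map.mp hmem2
        rw [List.mem_range] at hii
        refine ⟨ii, hii, ?_⟩
        intro jj hjj
        have hval : aff (cf ii jj) ((i x (αm m ii jj)) : ℝ) ∈
            (List.range (cols ii)).map fun jj => aff (cf ii jj) ((i x (αm m ii jj)) : ℝ) :=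
          List.mem_map_of_mem (List.mem_range.mpr hjj)
        have := le_listSup hval
        rw [heq] at this
        exact le_of_lt (lt_of_le_of_lt this hlow)
      · apply Set.mem_iInter₂.mpr
        intro m hm
        have happx := happ m x
        have hhigh : q' < FEval cf rows cols (fun ii jj => (i x (αm m ii jj) : ℝ)) := by
          have h1 := hyB m hm
          have h2 := abs_le.mp happx
          rw [hq'def]
          linarith [h2.1, h2.2]
        intro ii hii
        have hrowmem : listSup ((List.range (cols ii)).map fun jj =>
            aff (cf ii jj) ((i x (αm m ii jj)) : ℝ)) ∈
            (List.range rows).map fun ii => listSup ((List.range (cols ii)).map fun jj =>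
              aff (cf ii jj) ((i x (αm m ii jj)) : ℝ)) :=
          List.mem_map_of_mem (List.mem_range.mpr hii)
        have hrow := listInf_le hrowmem
        rw [← FEval] at hrow
        have hrow' : q' < listSup ((List.range (cols ii)).map fun jj =>
            aff (cf ii jj) ((i x (αm m ii jj)) : ℝ)) := lt_of_lt_of_le hhigh hrow
        have hne2 : ((List.range (cols ii)).map fun jj =>
            aff (cf ii jj) ((i x (αm m ii jj)) : ℝ)) ≠ [] := by
          simp only [ne_eq, List.map_eq_nil_iff, List.range_eq_nil]
          have := hc0 ii hii
          omega
        obtain ⟨jj, hjj, heq⟩ := List.mem_map.mp (listSup_mem hne2)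
        rw [List.mem_range] at hjj
        exact ⟨jj, hjj, le_of_lt (by rw [← heq] at hrow'; exact hrow')⟩
    -- each slot family admits no independent subfamily
    have hslot : ∀ ii, ii < rows → ∀ jj, jj < cols ii → ∀ M : Set ℕ, M.Infinite →
        ¬ IndepPairs (fun m => {x : K | hfn m ii jj x ≤ p'})
                     (fun m => {x : K | q' ≤ hfn m ii jj x}) M := by
      intro ii hii jj hjj M hMinf hind
      set pM : ℕ → Prop := fun m => m ∈ M with hpMdef
      have hpMi : (setOf pM).Infinite := hMinf
      have hνmono : StrictMono (Nat.nth pM) := Nat.nth_strictMono hpMi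
      have hνmem : ∀ k, Nat.nth pM k ∈ M := Nat.nth_mem_of_infinite hpMi
      set A : ℝ := ((cf ii jj).1 : ℝ) with hA
      set B : ℝ := ((cf ii jj).2 : ℝ) with hB
      have hA0 : A ≠ 0 := by
        rw [hA]
        exact_mod_cast hnz0 ii hii jj hjj
      have hAbd' : |A| ≤ Abd e₀ := hAbd ii hii jj hjj
      have hAbspos : 0 < |A| := abs_pos.mpr hA0
      have hAbdpos : 0 < Abd e₀ := Abd_pos e₀
      have hgap3 : (q' - p') / |A| > 2 * δ := by
        have hqp : 0 < q' - p' := lt_trans (half_pos hε) hp'q'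
        have h1 : (q' - p') / Abd e₀ ≤ (q' - p') / |A| :=
          div_le_div_of_nonneg_left (le_of_lt hqp) hAbspos hAbd'
        have h2 : (ε / 2) / Abd e₀ < (q' - p') / Abd e₀ :=
          div_lt_div_of_pos_right hp'q' hAbdpos
        have h3 : (ε / 2) / Abd e₀ = 2 * δ := by
          rw [hδdef]
          field_simp
          ring
        linarith
      set φ' : ℕ → Γ := fun k => αm (Nat.nth pM k) ii jj with hφ'def
      have hφ'mem : ∀ k, φ' k ∈ ΓsK e₀ (pidx ii jj) := fun k =>
        hα (Nat.nth pM k) ii hii jj hjj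
      have heqfn : ∀ m (x : K), hfn m ii jj x = A * ((i x (αm m ii jj)) : ℝ) + B := by
        intro m x
        rfl
      by_cases hApos : 0 < A
      · set Pt : ℝ := (p' - B) / A + δ / 2 with hPtdef
        set Qt : ℝ := (q' - B) / A - δ / 2 with hQtdef
        have hgapPQ : Qt - Pt > ε / (4 * Abd e₀) := by
          have hdiff : (q' - B) / A - (p' - B) / A = (q' - p') / A := by ring
          have habsA : |A| = A := abs_of_pos hApos
          rw [habsA] at hgap3
          rw [hQtdef, hPtdef, ← hδdef]
          linarith
        refine hnind e₀ (pidx ii jj) Pt Qt hgapPQ ⟨φ', hφ'mem, ?_⟩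
        intro nn εf
        set F₀' : Finset ℕ := (Finset.univ.filter (fun k : Fin nn => ¬ (εf k = true))).image
          (fun k : Fin nn => Nat.nth pM (k : ℕ)) with hF₀'
        set F₁' : Finset ℕ := (Finset.univ.filter (fun k : Fin nn => εf k = true)).image
          (fun k : Fin nn => Nat.nth pM (k : ℕ)) with hF₁'
        have hsub₀ : ↑F₀' ⊆ M := by
          intro m hm
          simp only [hF₀', Finset.coe_image, Set.mem_image] at hm
          obtain ⟨k, _, rfl⟩ := hm
          exact hνmem k
        have hsub₁ : ↑F₁' ⊆ M := by
          intro m hm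
          simp only [hF₁', Finset.coe_image, Set.mem_image] at hm
          obtain ⟨k, _, rfl⟩ := hm
          exact hνmem k
        have hdisj' : Disjoint F₀' F₁' := by
          rw [Finset.disjoint_left]
          intro m h0 h1
          simp only [hF₀', hF₁', Finset.mem_image, Finset.mem_filter, Finset.mem_univ,
            true_and] at h0 h1
          obtain ⟨k0, hk0, hv0⟩ := h0
          obtain ⟨k1, hk1, hv1⟩ := h1
          have hkk : (k0 : ℕ) = (k1 : ℕ) := hνmono.injective (hv0.trans hv1.symm)
          have hk01 : k0 = k1 := Fin.ext hkk
          rw [hk01] at hk0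
          exact hk0 hk1
        obtain ⟨x, hx⟩ := hind F₀' F₁' hsub₀ hsub₁ hdisj'
        refine ⟨x, ?_⟩
        apply Set.mem_iInter.mpr
        intro k
        by_cases hk : εf k = true
        · rw [if_pos hk]
          have hmem : Nat.nth pM (k : ℕ) ∈ F₁' := by
            simp only [hF₁', Finset.mem_image, Finset.mem_filter, Finset.mem_univ, true_and]
            exact ⟨k, hk, rfl⟩
          have hxB := Set.mem_iInter₂.mp hx.2 _ hmem
          simp only [Set.mem_setOf_eq] at hxB ⊢
          rw [heqfn] at hxB
          have ht : (q' - B) / A ≤ ((i x (φ' (k : ℕ))) : ℝ) := by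
            rw [div_le_iff₀ hApos]
            have : ((i x (φ' (k : ℕ))) : ℝ) = ((i x (αm (Nat.nth pM (k : ℕ)) ii jj)) : ℝ) := rfl
            rw [this]
            linarith
          rw [hQtdef] at *
          linarith [hδpos]
        · rw [if_neg hk]
          have hmem : Nat.nth pM (k : ℕ) ∈ F₀' := by
            simp only [hF₀', Finset.mem_image, Finset.mem_filter, Finset.mem_univ, true_and]
            exact ⟨k, hk, rfl⟩
          have hxA := Set.mem_iInter₂.mp hx.1 _ hmem
          simp only [Set.mem_setOf_eq] at hxA ⊢
          rw [heqfn] at hxA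
          have ht : ((i x (φ' (k : ℕ))) : ℝ) ≤ (p' - B) / A := by
            rw [le_div_iff₀ hApos]
            have : ((i x (φ' (k : ℕ))) : ℝ) = ((i x (αm (Nat.nth pM (k : ℕ)) ii jj)) : ℝ) := rfl
            rw [this]
            linarith
          rw [hPtdef] at *
          linarith [hδpos]
      · have hAneg : A < 0 := lt_of_le_of_ne (not_lt.mp hApos) hA0
        set Pt : ℝ := (q' - B) / A + δ / 2 with hPtdef
        set Qt : ℝ := (p' - B) / A - δ / 2 with hQtdef
        have hgapPQ : Qt - Pt > ε / (4 * Abd e₀) := by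
          have hdiff : (p' - B) / A - (q' - B) / A = (q' - p') / (-A) := by
            rw [div_sub_div_same, div_neg, ← neg_div]
            congr 1
            ring
          have habsA : |A| = -A := abs_of_neg hAneg
          rw [habsA] at hgap3
          rw [hQtdef, hPtdef, ← hδdef]
          linarith
        refine hnind e₀ (pidx ii jj) Pt Qt hgapPQ ⟨φ', hφ'mem, ?_⟩
        intro nn εf
        set F₀' : Finset ℕ := (Finset.univ.filter (fun k : Fin nn => εf k = true)).image
          (fun k : Fin nn => Nat.nth pM (k : ℕ)) with hF₀'
        set F₁' : Finset ℕ := (Finset.univ.filter (fun k : Fin nn => ¬ (εf k = true))).image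
          (fun k : Fin nn => Nat.nth pM (k : ℕ)) with hF₁'
        have hsub₀ : ↑F₀' ⊆ M := by
          intro m hm
          simp only [hF₀', Finset.coe_image, Set.mem_image] at hm
          obtain ⟨k, _, rfl⟩ := hm
          exact hνmem k
        have hsub₁ : ↑F₁' ⊆ M := by
          intro m hm
          simp only [hF₁', Finset.coe_image, Set.mem_image] at hm
          obtain ⟨k, _, rfl⟩ := hm
          exact hνmem k
        have hdisj' : Disjoint F₀' F₁' := by
          rw [Finset.disjoint_left]
          intro m h0 h1
          simp only [hF₀', hF₁', Finset.mem_image, Finset.mem_filter, Finset.mem_univ,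
            true_and] at h0 h1
          obtain ⟨k0, hk0, hv0⟩ := h0
          obtain ⟨k1, hk1, hv1⟩ := h1
          have hkk : (k0 : ℕ) = (k1 : ℕ) := hνmono.injective (hv0.trans hv1.symm)
          have hk01 : k0 = k1 := Fin.ext hkk
          rw [hk01] at hk0
          exact hk1 hk0
        obtain ⟨x, hx⟩ := hind F₀' F₁' hsub₀ hsub₁ hdisj'
        refine ⟨x, ?_⟩
        apply Set.mem_iInter.mpr
        intro k
        by_cases hk : εf k = true
        · rw [if_pos hk]
          have hmem : Nat.nth pM (k : ℕ) ∈ F₀' := by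
            simp only [hF₀', Finset.mem_image, Finset.mem_filter, Finset.mem_univ, true_and]
            exact ⟨k, hk, rfl⟩
          have hxA := Set.mem_iInter₂.mp hx.1 _ hmem
          simp only [Set.mem_setOf_eq] at hxA ⊢
          rw [heqfn] at hxA
          have ht : (p' - B) / A ≤ ((i x (φ' (k : ℕ))) : ℝ) := by
            rw [div_le_iff_of_neg hAneg]
            have : ((i x (φ' (k : ℕ))) : ℝ) = ((i x (αm (Nat.nth pM (k : ℕ)) ii jj)) : ℝ) := rfl
            rw [this]
            linarith
          rw [hQtdef] at *
          linarith [hδpos]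
        · rw [if_neg hk]
          have hmem : Nat.nth pM (k : ℕ) ∈ F₁' := by
            simp only [hF₁', Finset.mem_image, Finset.mem_filter, Finset.mem_univ, true_and]
            exact ⟨k, hk, rfl⟩
          have hxB := Set.mem_iInter₂.mp hx.2 _ hmem
          simp only [Set.mem_setOf_eq] at hxB ⊢
          rw [heqfn] at hxB
          have ht : ((i x (φ' (k : ℕ))) : ℝ) ≤ (q' - B) / A := by
            rw [le_div_iff_of_neg hAneg]
            have : ((i x (φ' (k : ℕ))) : ℝ) = ((i x (αm (Nat.nth pM (k : ℕ)) ii jj)) : ℝ) := rfl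
            rw [this]
            linarith
          rw [hPtdef] at *
          linarith [hδpos]
    -- iterate the dichotomy over all slots
    set slots : List (ℕ × ℕ) :=
      (List.range rows).flatMap (fun ii => (List.range (cols ii)).map (fun jj => (ii, jj)))
      with hslotsdef
    have hslmem : ∀ σ, σ ∈ slots → σ.1 < rows ∧ σ.2 < cols σ.1 := by
      intro σ hσ
      simp only [hslotsdef, List.mem_flatMap, List.mem_map, List.mem_range] at hσ
      obtain ⟨ii, hii, jj, hjj, rfl⟩ := hσ
      exact ⟨hii, hjj⟩
    have hmemslots : ∀ ii, ii < rows → ∀ jj, jj < cols ii → (ii, jj) ∈ slots := by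
      intro ii hii jj hjj
      simp only [hslotsdef, List.mem_flatMap, List.mem_map, List.mem_range]
      exact ⟨ii, hii, jj, hjj, rfl⟩
    obtain ⟨M, hMsub, hMinf, hMconv⟩ := iterate_rd
      (fun σ m => {x : K | hfn m σ.1 σ.2 x ≤ p'})
      (fun σ m => {x : K | q' ≤ hfn m σ.1 σ.2 x}) slots
      (fun σ hσ M hMi => hslot σ.1 (hslmem σ hσ).1 σ.2 (hslmem σ hσ).2 M hMi)
      Set.univ Set.infinite_univ
    set pM : ℕ → Prop := fun m => m ∈ M with hpMdef
    have hpMi : (setOf pM).Infinite := hMinf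
    have hνmono : StrictMono (Nat.nth pM) := Nat.nth_strictMono hpMi
    have hνmem : ∀ k, Nat.nth pM k ∈ M := Nat.nth_mem_of_infinite hpMi
    set W : ℕ → Set K := fun kk => ⋂ l ∈ Finset.range (kk + 1),
      (if Even l then CC (Nat.nth pM l) else DD (Nat.nth pM l)) with hWdef
    have hCCclosed : ∀ m, IsClosed (CC m) := by
      intro m
      have hrw : CC m = ⋃ ii ∈ Finset.range rows, ⋂ jj ∈ Finset.range (cols ii),
          {x : K | hfn m ii jj x ≤ p'} := by
        ext x
        simp only [hCCdef, Set.mem_setOf_eq, Set.mem_iUnion, Set.mem_iInter,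
          Finset.mem_range, exists_prop]
      rw [hrw]
      apply Set.Finite.isClosed_biUnion (Finset.range rows).finite_toSet
      intro ii _
      apply isClosed_biInter
      intro jj _
      exact isClosed_le (hfnc m ii jj) continuous_const
    have hDDclosed : ∀ m, IsClosed (DD m) := by
      intro m
      have hrw : DD m = ⋂ ii ∈ Finset.range rows, ⋃ jj ∈ Finset.range (cols ii),
          {x : K | q' ≤ hfn m ii jj x} := by
        ext x
        simp only [hDDdef, Set.mem_setOf_eq, Set.mem_iUnion, Set.mem_iInter,
          Finset.mem_range, exists_prop]
      rw [hrw]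
      apply isClosed_biInter
      intro ii _
      apply Set.Finite.isClosed_biUnion (Finset.range (cols ii)).finite_toSet
      intro jj _
      exact isClosed_le continuous_const (hfnc m ii jj)
    have hWclosed : ∀ kk, IsClosed (W kk) := by
      intro kk
      apply isClosed_biInter
      intro l _
      by_cases hl : Even l
      · rw [if_pos hl]
        exact hCCclosed _
      · rw [if_neg hl]
        exact hDDclosed _
    have hWne : ∀ kk, (W kk).Nonempty := by
      intro kk
      set G₀ : Finset ℕ := ((Finset.range (kk + 1)).filter (fun l => Even l)).image
        (Nat.nth pM) with hG₀
      set G₁ : Finset ℕ := ((Finset.range (kk + 1)).filter (fun l => ¬ Even l)).image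
        (Nat.nth pM) with hG₁
      have hdisj : Disjoint G₀ G₁ := by
        rw [Finset.disjoint_left]
        intro m hm0 hm1
        simp only [hG₀, hG₁, Finset.mem_image, Finset.mem_filter, Finset.mem_range] at hm0 hm1
        obtain ⟨l0, ⟨_, he0⟩, hv0⟩ := hm0
        obtain ⟨l1, ⟨_, he1⟩, hv1⟩ := hm1
        have hl01 : l0 = l1 := hνmono.injective (hv0.trans hv1.symm)
        rw [hl01] at he0
        exact he1 he0
      obtain ⟨x, hx⟩ := hKind G₀ G₁ (Set.subset_univ _) (Set.subset_univ _) hdisj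
      refine ⟨x, ?_⟩
      rw [hWdef]
      apply Set.mem_iInter₂.mpr
      intro l hl
      by_cases hle : Even l
      · rw [if_pos hle]
        have hmem : Nat.nth pM l ∈ G₀ := by
          simp only [hG₀, Finset.mem_image]
          exact ⟨l, Finset.mem_filter.mpr ⟨hl, hle⟩, rfl⟩
        exact Set.mem_iInter₂.mp hx.1 _ hmem
      · rw [if_neg hle]
        have hmem : Nat.nth pM l ∈ G₁ := by
          simp only [hG₁, Finset.mem_image]
          exact ⟨l, Finset.mem_filter.mpr ⟨hl, hle⟩, rfl⟩
        exact Set.mem_iInter₂.mp hx.2 _ hmem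
    have hWdec : ∀ kk, W (kk + 1) ⊆ W kk := by
      intro kk x hx
      rw [hWdef] at hx ⊢
      apply Set.mem_iInter₂.mpr
      intro l hl
      refine Set.mem_iInter₂.mp hx l ?_
      rw [Finset.mem_range] at hl ⊢
      omega
    obtain ⟨xs, hxs⟩ := IsCompact.nonempty_iInter_of_sequence_nonempty_isCompact_isClosed
      W hWdec hWne ((hWclosed 0).isCompact) hWclosed
    have hxsW : ∀ kk, xs ∈ W kk := fun kk => Set.mem_iInter.mp hxs kk
    have hxsC : ∀ l, Even l → xs ∈ CC (Nat.nth pM l) := by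
      intro l hl
      have hx := hxsW l
      rw [hWdef] at hx
      have hmem := Set.mem_iInter₂.mp hx l (Finset.mem_range.mpr (by omega))
      rwa [if_pos hl] at hmem
    have hxsD : ∀ l, ¬ Even l → xs ∈ DD (Nat.nth pM l) := by
      intro l hl
      have hx := hxsW l
      rw [hWdef] at hx
      have hmem := Set.mem_iInter₂.mp hx l (Finset.mem_range.mpr (by omega))
      rwa [if_neg hl] at hmem
    -- pigeonhole: fixed row for infinitely many even levels
    have hgexC : ∀ l, ∃ ii, Even l → (ii < rows ∧ ∀ jj, jj < cols ii →
        hfn (Nat.nth pM l) ii jj xs ≤ p') := by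
      intro l
      by_cases hl : Even l
      · obtain ⟨ii, h1, h2⟩ := hxsC l hl
        exact ⟨ii, fun _ => ⟨h1, h2⟩⟩
      · exact ⟨0, fun h => absurd h hl⟩
    choose gC hgC using hgexC
    have hevinf : ({l : ℕ | Even l}).Infinite :=
      Set.infinite_of_injective_forall_mem (f := fun k : ℕ => 2 * k)
        (fun a b h => by
          have h' : 2 * a = 2 * b := h
          omega)
        (fun k => by
          show Even (2 * k)
          rw [Nat.even_iff]
          omega)
    obtain ⟨iis, hiis, hL1⟩ := pigeonhole_infinite {l | Even l} hevinf gC rows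
      (fun l hl => (hgC l hl).1)
    -- pigeonhole: fixed column for infinitely many odd levels
    have hgexD : ∀ l, ∃ jj, ¬ Even l → (jj < cols iis ∧
        q' ≤ hfn (Nat.nth pM l) iis jj xs) := by
      intro l
      by_cases hl : Even l
      · exact ⟨0, fun h => absurd hl h⟩
      · obtain ⟨jj, h1, h2⟩ := hxsD l hl iis hiis
        exact ⟨jj, fun _ => ⟨h1, h2⟩⟩
    choose gD hgD using hgexD
    have hodinf : ({l : ℕ | ¬ Even l}).Infinite :=
      Set.infinite_of_injective_forall_mem (f := fun k : ℕ => 2 * k + 1)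
        (fun a b h => by
          have h' : 2 * a + 1 = 2 * b + 1 := h
          omega)
        (fun k => by
          show ¬ Even (2 * k + 1)
          rw [Nat.even_iff]
          omega)
    obtain ⟨jjs, hjjs, hL2⟩ := pigeonhole_infinite {l | ¬ Even l} hodinf gD (cols iis)
      (fun l hl => (hgD l hl).1)
    -- contradiction with the convergence property at slot (iis, jjs)
    apply hMconv (iis, jjs) (hmemslots iis hiis jjs hjjs) xs
    constructor
    · refine Set.Infinite.mono ?_ (hL1.image (Set.injOn_of_injective hνmono.injective))
      rintro m ⟨l, ⟨hlev, hlg⟩, rfl⟩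
      refine ⟨hνmem l, ?_⟩
      have h2 := (hgC l hlev).2
      rw [hlg] at h2
      exact h2 jjs hjjs
    · refine Set.Infinite.mono ?_ (hL2.image (Set.injOn_of_injective hνmono.injective))
      rintro m ⟨l, ⟨hlev, hlg⟩, rfl⟩
      refine ⟨hνmem l, ?_⟩
      have h2 := (hgD l hlev).2
      rw [hlg] at h2
      exact h2

end QWRNAux


/-- The continuous image of a QWRN compact Hausdorff space is QWRN. -/
theorem isQWRN_of_continuous_surjection
    {K L : Type*} [TopologicalSpace K] [TopologicalSpace L]
    [CompactSpace K] [T2Space K] [CompactSpace L] [T2Space L]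
    (f : K → L) (hf : Continuous f) (hsurj : Function.Surjective f)
    (hK : IsQWRN K) : IsQWRN L := by
  exact QWRNAux.isQWRN_of_continuous_surjection' f hf hsurj hK
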